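/- For every nonzero α ∈ ℂ, the Lie-Yamaguti algebra structure 𝓛₂₉ on ℂ⁴, given by [e₁,e₂]=e₃, [e₁,e₃]=e₄, [e₂,e₃]=e₄, [e₁,e₃,e₂]=e₄, [e₂,e₃,e₁]=e₄, degenerates to the structure 𝓛₂₃^α given by [e₁,e₂]=e₃, [e₁,e₃]=α e₄, [e₁,e₂,e₁]=e₄, [e₂,e₃,e₂]=e₄. -/

import Mathlib

open Filter Matrix Topology

/-- ℂ⁴ -/
abbrev V4 : Type := Fin 4 → ℂ

/-- GL₄(ℂ) -/
abbrev GL4 := Matrix.GeneralLinearGroup (Fin 4) ℂ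

/-- structure constants of a bilinear map on ℂ⁴: `μ i j` is the value on `(eᵢ, eⱼ)`. -/
abbrev Bil4 := Fin 4 → Fin 4 → V4

/-- structure constants of a trilinear map on ℂ⁴. -/
abbrev Tril4 := Fin 4 → Fin 4 → Fin 4 → V4

/-- standard basis vectors -/
noncomputable def e4 (k : Fin 4) : V4 := Pi.single k (1 : ℂ)

/-- action of `g ∈ GL₄(ℂ)` on a bilinear map: `(g·μ)(x,y) = g μ(g⁻¹x, g⁻¹y)`,
in structure constants. -/
noncomputable def actBil (g : GL4) (μ : Bil4) : Bil4 := fun i j =>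
  (g : Matrix (Fin 4) (Fin 4) ℂ).mulVec
    (∑ p, ∑ q,
      (((g⁻¹ : GL4) : Matrix (Fin 4) (Fin 4) ℂ) p i *
       ((g⁻¹ : GL4) : Matrix (Fin 4) (Fin 4) ℂ) q j) • μ p q)

/-- action of `g ∈ GL₄(ℂ)` on a trilinear map:
`(g·τ)(x,y,z) = g τ(g⁻¹x, g⁻¹y, g⁻¹z)`, in structure constants. -/
noncomputable def actTril (g : GL4) (τ : Tril4) : Tril4 := fun i j k =>
  (g : Matrix (Fin 4) (Fin 4) ℂ).mulVec
    (∑ p, ∑ q, ∑ r,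
      (((g⁻¹ : GL4) : Matrix (Fin 4) (Fin 4) ℂ) p i *
       ((g⁻¹ : GL4) : Matrix (Fin 4) (Fin 4) ℂ) q j *
       ((g⁻¹ : GL4) : Matrix (Fin 4) (Fin 4) ℂ) r k) • τ p q r)

/-- `(μ,τ)` degenerates to `(lam,sig)`: there is a curve `g : ℂ∖{0} → GL₄(ℂ)` with
`g(t)·μ → lam` and `g(t)·τ → sig` as `t → 0`. -/
def Degenerates (μ : Bil4) (τ : Tril4) (lam : Bil4) (sig : Tril4) : Prop :=
  ∃ g : ℂ → GL4,
    Tendsto (fun t => actBil (g t) μ) (𝓝[≠] (0 : ℂ)) (𝓝 lam) ∧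
    Tendsto (fun t => actTril (g t) τ) (𝓝[≠] (0 : ℂ)) (𝓝 sig)

noncomputable def μL29 : Bil4 := fun i j =>
  if i = (0 : Fin 4) ∧ j = (1 : Fin 4) then e4 2
  else if i = (1 : Fin 4) ∧ j = (0 : Fin 4) then -(e4 2)
  else if i = (0 : Fin 4) ∧ j = (2 : Fin 4) then e4 3
  else if i = (2 : Fin 4) ∧ j = (0 : Fin 4) then -(e4 3)
  else if i = (1 : Fin 4) ∧ j = (2 : Fin 4) then e4 3
  else if i = (2 : Fin 4) ∧ j = (1 : Fin 4) then -(e4 3)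
  else 0

noncomputable def τL29 : Tril4 := fun i j k =>
  if i = (0 : Fin 4) ∧ j = (2 : Fin 4) ∧ k = (1 : Fin 4) then e4 3
  else if i = (2 : Fin 4) ∧ j = (0 : Fin 4) ∧ k = (1 : Fin 4) then -(e4 3)
  else if i = (1 : Fin 4) ∧ j = (2 : Fin 4) ∧ k = (0 : Fin 4) then e4 3
  else if i = (2 : Fin 4) ∧ j = (1 : Fin 4) ∧ k = (0 : Fin 4) then -(e4 3)
  else 0

noncomputable def μL23 (α : ℂ) : Bil4 := fun i j =>
  if i = (0 : Fin 4) ∧ j = (1 : Fin 4) then e4 2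
  else if i = (1 : Fin 4) ∧ j = (0 : Fin 4) then -(e4 2)
  else if i = (0 : Fin 4) ∧ j = (2 : Fin 4) then α • e4 3
  else if i = (2 : Fin 4) ∧ j = (0 : Fin 4) then -(α • e4 3)
  else 0

noncomputable def τL23 : Tril4 := fun i j k =>
  if i = (0 : Fin 4) ∧ j = (1 : Fin 4) ∧ k = (0 : Fin 4) then e4 3
  else if i = (1 : Fin 4) ∧ j = (0 : Fin 4) ∧ k = (0 : Fin 4) then -(e4 3)
  else if i = (1 : Fin 4) ∧ j = (2 : Fin 4) ∧ k = (1 : Fin 4) then e4 3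
  else if i = (2 : Fin 4) ∧ j = (1 : Fin 4) ∧ k = (1 : Fin 4) then -(e4 3)
  else 0

-- ### Auxiliary material for the proof

noncomputable def Amat (α t : ℂ) : Matrix (Fin 4) (Fin 4) ℂ :=
  !![ -1/(2*α*t^2), -1/(2*α*t^2), 0, 0;
      (t+α)/(2*α*t), (t-α)/(2*α*t), 0, 0;
      1/(2*α^2*t^3), -1/(2*α^2*t^3), 1/(2*α*t^3), 0;
      1/(2*α^3*t^5), -1/(2*α^3*t^5), 1/(2*α^2*t^5), -1/(4*α*t^5)]

noncomputable def Bmat (α t : ℂ) : Matrix (Fin 4) (Fin 4) ℂ :=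
  !![ t^3-α*t^2, t, 0, 0;
      -t^3-α*t^2, -t, 0, 0;
      -2*t^3/α, -2*t/α, 2*α*t^3, 0;
      0, 0, 4*t^3, -4*α*t^5]

set_option maxHeartbeats 1000000 in
lemma hAB (α t : ℂ) (hα : α ≠ 0) (ht : t ≠ 0) : Amat α t * Bmat α t = 1 := by
  ext i j
  fin_cases i <;> fin_cases j <;>
    simp [Amat, Bmat, Matrix.mul_apply, Fin.sum_univ_four, Matrix.one_apply] <;>
    (try field_simp) <;> (try ring) <;> field_simp <;> ring

set_option maxHeartbeats 1000000 in
lemma hBA (α t : ℂ) (hα : α ≠ 0) (ht : t ≠ 0) : Bmat α t * Amat α t = 1 := by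
  ext i j
  fin_cases i <;> fin_cases j <;>
    simp [Amat, Bmat, Matrix.mul_apply, Fin.sum_univ_four, Matrix.one_apply] <;>
    (try field_simp) <;> (try ring) <;> field_simp <;> ring

noncomputable def gU (α t : ℂ) (hα : α ≠ 0) (ht : t ≠ 0) : GL4 :=
  ⟨Amat α t, Bmat α t, hAB α t hα ht, hBA α t hα ht⟩

noncomputable def cX (α t : ℂ) (i j : Fin 4) : ℂ :=
  Bmat α t 0 i * Bmat α t 1 j - Bmat α t 1 i * Bmat α t 0 j

noncomputable def cY (α t : ℂ) (i j : Fin 4) : ℂ :=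
  Bmat α t 0 i * Bmat α t 2 j - Bmat α t 2 i * Bmat α t 0 j
  + Bmat α t 1 i * Bmat α t 2 j - Bmat α t 2 i * Bmat α t 1 j

noncomputable def cZ (α t : ℂ) (i j k : Fin 4) : ℂ :=
  (Bmat α t 0 i * Bmat α t 2 j - Bmat α t 2 i * Bmat α t 0 j) * Bmat α t 1 k
  + (Bmat α t 1 i * Bmat α t 2 j - Bmat α t 2 i * Bmat α t 1 j) * Bmat α t 0 k

lemma sum_mu (α t : ℂ) (i j : Fin 4) :
    (∑ p, ∑ q, (Bmat α t p i * Bmat α t q j) • μL29 p q)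
      = cX α t i j • e4 2 + cY α t i j • e4 3 := by
  simp [μL29, Fin.sum_univ_four, cX, cY]
  module

lemma sum_tau (α t : ℂ) (i j k : Fin 4) :
    (∑ p, ∑ q, ∑ r, (Bmat α t p i * Bmat α t q j * Bmat α t r k) • τL29 p q r)
      = cZ α t i j k • e4 3 := by
  simp [τL29, Fin.sum_univ_four, cZ]
  module

lemma mulvecA (α t x y : ℂ) :
    (Amat α t).mulVec (x • e4 2 + y • e4 3)
      = ![0, 0, x/(2*α*t^3), x/(2*α^2*t^5) - y/(4*α*t^5)] := by
  funext m
  fin_cases m <;>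
    simp [Amat, Matrix.mulVec, dotProduct, e4, Fin.sum_univ_four, Pi.single_apply] <;>
    ring

lemma mulvecA3 (α t y : ℂ) :
    (Amat α t).mulVec (y • e4 3) = ![0, 0, 0, -y/(4*α*t^5)] := by
  funext m
  fin_cases m <;>
    simp [Amat, Matrix.mulVec, dotProduct, e4, Fin.sum_univ_four, Pi.single_apply] <;>
    ring

/-- first-order correction to `τL23` -/
noncomputable def Dcorr1 : Tril4 := fun i j k =>
  if i = (0 : Fin 4) ∧ j = (2 : Fin 4) ∧ k = (1 : Fin 4) then e4 3
  else if i = (2 : Fin 4) ∧ j = (0 : Fin 4) ∧ k = (1 : Fin 4) then -(e4 3)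
  else if i = (1 : Fin 4) ∧ j = (2 : Fin 4) ∧ k = (0 : Fin 4) then e4 3
  else if i = (2 : Fin 4) ∧ j = (1 : Fin 4) ∧ k = (0 : Fin 4) then -(e4 3)
  else 0

/-- second correction to `τL23` -/
noncomputable def Dcorr2 : Tril4 := fun i j k =>
  if i = (0 : Fin 4) ∧ j = (2 : Fin 4) ∧ k = (0 : Fin 4) then e4 3
  else if i = (2 : Fin 4) ∧ j = (0 : Fin 4) ∧ k = (0 : Fin 4) then -(e4 3)
  else 0

set_option maxHeartbeats 2000000 in
lemma mu_eq (α t : ℂ) (hα : α ≠ 0) (ht : t ≠ 0) :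
    actBil (gU α t hα ht) μL29 = μL23 α := by
  funext i j
  show (Amat α t).mulVec (∑ p, ∑ q, (Bmat α t p i * Bmat α t q j) • μL29 p q) = μL23 α i j
  rw [sum_mu, mulvecA]
  fin_cases i <;> fin_cases j <;>
    funext m <;> fin_cases m <;>
    simp [cX, cY, Bmat, μL23, e4, Pi.single_apply] <;>
    (try field_simp) <;> (try ring) <;> simp

set_option maxHeartbeats 4000000 in
lemma tau_eq (α t : ℂ) (hα : α ≠ 0) (ht : t ≠ 0) :
    actTril (gU α t hα ht) τL29
      = τL23 + t^2 • Dcorr1 + (t^4 - α^2*t^2) • Dcorr2 := by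
  funext i j k
  show (Amat α t).mulVec
      (∑ p, ∑ q, ∑ r, (Bmat α t p i * Bmat α t q j * Bmat α t r k) • τL29 p q r)
    = (τL23 + t^2 • Dcorr1 + (t^4 - α^2*t^2) • Dcorr2) i j k
  rw [sum_tau, mulvecA3]
  fin_cases i <;> fin_cases j <;> fin_cases k <;>
    funext m <;> fin_cases m <;>
    simp [cZ, Bmat, τL23, Dcorr1, Dcorr2, e4, Pi.single_apply] <;>
    (try field_simp) <;> (try ring) <;> simp

/-- for every nonzero α, 𝓛₂₉ degenerates to 𝓛₂₃^α. -/
theorem stmt6 : ∀ α : ℂ, α ≠ 0 → Degenerates μL29 τL29 (μL23 α) τL23 := by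
  intro α hα
  refine ⟨fun t => if ht : t = 0 then 1 else gU α t hα ht, ?_, ?_⟩
  · apply Tendsto.congr' _ (tendsto_const_nhds (x := μL23 α))
    filter_upwards [self_mem_nhdsWithin] with t ht'
    have ht0 : t ≠ 0 := ht'
    rw [dif_neg ht0]
    exact (mu_eq α t hα ht0).symm
  · have hc : Continuous
        (fun t : ℂ => τL23 + t^2 • Dcorr1 + (t^4 - α^2*t^2) • Dcorr2) := by
      fun_prop
    have h2 : Tendsto (fun t : ℂ => τL23 + t^2 • Dcorr1 + (t^4 - α^2*t^2) • Dcorr2)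
        (𝓝[≠] (0 : ℂ)) (𝓝 τL23) := by
      have h3 : Tendsto (fun t : ℂ => τL23 + t^2 • Dcorr1 + (t^4 - α^2*t^2) • Dcorr2)
          (𝓝 (0 : ℂ)) (𝓝 τL23) := by simpa using hc.tendsto 0
      exact h3.mono_left nhdsWithin_le_nhds
    apply Tendsto.congr' _ h2
    filter_upwards [self_mem_nhdsWithin] with t ht'
    have ht0 : t ≠ 0 := ht'
    rw [dif_neg ht0]
    exact (tau_eq α t hα ht0).symm
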